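/- Let A be a 4-algebra, E a vector space, and π : E → A a surjective linear map with kernel V. If ·_E is a 4-algebra structure on E such that π is an algebra map, then E is isomorphic, as a 4-algebra, to a crossed product V # A; moreover, the isomorphism can be chosen to be the identity on V and to commute with the projections to A. -/
import Mathlib


structure FourAlgebra (k : Type*) (A : Type*) [Field k] [AddCommGroup A] [Module k A] where
  mul : A →ₗ[k] A →ₗ[k] A
  comm : ∀ a b : A, mul a b = mul b a
  four : ∀ a : A, mul (mul a a) (mul a a) = 0

/-- Any 4-algebra structure on E making a linear surjection π : E → A an algebra map is
isomorphic to a crossed product V # A with V = ker π, via an isomorphism stabilizing V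
and co-stabilizing A. -/
theorem stmt10 (k A E : Type*) [Field k] [AddCommGroup A] [Module k A]
    [AddCommGroup E] [Module k E]
    (FA : FourAlgebra k A) (FE : FourAlgebra k E)
    (π : E →ₗ[k] A) (hsurj : Function.Surjective π)
    (hπ : ∀ x y : E, π (FE.mul x y) = FA.mul (π x) (π y)) :
    ∃ (tr : A →ₗ[k] (LinearMap.ker π) →ₗ[k] (LinearMap.ker π))
      (f : A →ₗ[k] A →ₗ[k] (LinearMap.ker π))
      (mv : (LinearMap.ker π) →ₗ[k] (LinearMap.ker π) →ₗ[k] (LinearMap.ker π))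
      (φ : ((LinearMap.ker π) × A) ≃ₗ[k] E),
      (∀ z w : (LinearMap.ker π) × A,
        φ (mv z.1 w.1 + tr z.2 w.1 + tr w.2 z.1 + f z.2 w.2, FA.mul z.2 w.2)
          = FE.mul (φ z) (φ w)) ∧
      (∀ x : LinearMap.ker π, φ (x, 0) = (x : E)) ∧
      (∀ z : (LinearMap.ker π) × A, π (φ z) = z.2) := by
  obtain ⟨s, hs⟩ := π.exists_rightInverse_of_surjective (LinearMap.range_eq_top.2 hsurj)
  have hsa : ∀ a : A, π (s a) = a := fun a => congrArg (fun g => g a) (congrArg DFunLike.coe hs)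
  set V := LinearMap.ker π
  have hpV : ∀ e : E, ((LinearMap.id : E →ₗ[k] E) - s ∘ₗ π) e ∈ V := by
    intro e
    simp [V, LinearMap.mem_ker, hsa]
  let pV : E →ₗ[k] V := LinearMap.codRestrict V ((LinearMap.id : E →ₗ[k] E) - s ∘ₗ π) hpV
  have hpV' : ∀ e : E, (pV e : E) = e - s (π e) := fun e => rfl
  have hpVker : ∀ e : E, π e = 0 → (pV e : E) = e := by
    intro e he; rw [hpV', he, map_zero, sub_zero]
  let tr : A →ₗ[k] V →ₗ[k] V := ((FE.mul ∘ₗ s).compl₂ V.subtype).compr₂ pV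
  let f : A →ₗ[k] A →ₗ[k] V := ((FE.mul ∘ₗ s).compl₂ s - FA.mul.compr₂ s).compr₂ pV
  let mv : V →ₗ[k] V →ₗ[k] V := ((FE.mul ∘ₗ V.subtype).compl₂ V.subtype).compr₂ pV
  have hker : ∀ x : V, π (x : E) = 0 := fun x => x.2
  have h1 : (V.subtype.coprod s) ∘ₗ (pV.prod π) = LinearMap.id := by
    ext e
    simp [hpV']
  have h2 : (pV.prod π) ∘ₗ (V.subtype.coprod s) = LinearMap.id := by
    ext z <;> simp [hpV', hsa, hker]
  let φ : (V × A) ≃ₗ[k] E := LinearEquiv.ofLinear (V.subtype.coprod s) (pV.prod π) h1 h2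
  have hφ : ∀ z : V × A, φ z = (z.1 : E) + s z.2 := fun z => rfl
  refine ⟨tr, f, mv, φ, ?_, ?_, ?_⟩
  · intro z w
    have hmv : ((mv z.1 w.1 : V) : E) = FE.mul (z.1 : E) (w.1 : E) := by
      apply hpVker; simp only [LinearMap.compl₂_apply, LinearMap.comp_apply,
        Submodule.coe_subtype]; rw [hπ]; simp [hker]
    have htr1 : ((tr z.2 w.1 : V) : E) = FE.mul (s z.2) (w.1 : E) := by
      apply hpVker; simp only [LinearMap.compl₂_apply, LinearMap.comp_apply,
        Submodule.coe_subtype]; rw [hπ]; simp [hker, hsa]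
    have htr2 : ((tr w.2 z.1 : V) : E) = FE.mul (s w.2) (z.1 : E) := by
      apply hpVker; simp only [LinearMap.compl₂_apply, LinearMap.comp_apply,
        Submodule.coe_subtype]; rw [hπ]; simp [hker, hsa]
    have hf : ((f z.2 w.2 : V) : E) = FE.mul (s z.2) (s w.2) - s (FA.mul z.2 w.2) := by
      apply hpVker; simp only [LinearMap.sub_apply, LinearMap.compl₂_apply,
        LinearMap.compr₂_apply, LinearMap.comp_apply, map_sub]; rw [hπ]; simp [hsa]
    rw [hφ, hφ, hφ]
    push_cast [hmv, htr1, htr2, hf]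
    simp only [map_add, LinearMap.add_apply]
    rw [FE.comm (s w.2) (z.1 : E)]
    abel
  · intro x
    rw [hφ]; simp
  · intro z
    rw [hφ]; simp [hker, hsa]
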